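/- Among all trees on n ≥ 3 vertices, the star S_n is the unique tree with minimum average eccentricity; that is, for every tree T on n vertices, ecc(T) ≥ 2 − 1/n = ecc(S_n), with equality if and only if T ≅ S_n. -/

import Mathlib

open SimpleGraph

/-- The eccentricity of a vertex: the maximum distance from it to any other vertex. -/
noncomputable def eccentricity {V : Type*} [Fintype V] (G : SimpleGraph V) (v : V) : ℕ :=
  Finset.univ.sup fun u => G.dist v u

/-- The average eccentricity of a graph. -/
noncomputable def avgEcc {V : Type*} [Fintype V] (G : SimpleGraph V) : ℝ :=
  (∑ v : V, (eccentricity G v : ℝ)) / (Fintype.card V : ℝ)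

/-- The star `S n` on `n` vertices with center `0`. -/
def starGraph (n : ℕ) : SimpleGraph (Fin n) :=
  SimpleGraph.fromRel (fun i _ => (i : ℕ) = 0)

section Aux

variable {V : Type*} [Fintype V] {G : SimpleGraph V}

lemma fin_val_eq_zero_iff {n : ℕ} [NeZero n] (i : Fin n) : (i : ℕ) = 0 ↔ i = 0 :=
  ⟨fun h => Fin.ext (by simp [h]), fun h => by simp [h]⟩

lemma dist_le_ecc (v u : V) : G.dist v u ≤ eccentricity G v :=
  Finset.le_sup (Finset.mem_univ u)

lemma ecc_le_iff {v : V} {k : ℕ} : eccentricity G v ≤ k ↔ ∀ u, G.dist v u ≤ k := by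
  simp [eccentricity, Finset.sup_le_iff]

lemma exists_third {n : ℕ} (hn : 3 ≤ n) (hcard : Fintype.card V = n) (u v : V) :
    ∃ w : V, w ≠ u ∧ w ≠ v := by
  classical
  have h2 : ({u, v} : Finset V).card ≤ 2 :=
    (Finset.card_insert_le _ _).trans (by simp)
  have hne : (({u, v} : Finset V)ᶜ).Nonempty := by
    rw [← Finset.card_pos, Finset.card_compl]
    omega
  obtain ⟨w, hw⟩ := hne
  simp only [Finset.mem_compl, Finset.mem_insert, Finset.mem_singleton, not_or] at hw
  exact ⟨w, hw.1, hw.2⟩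

/-- In a graph with a universal vertex `v0` and no other edges, the average eccentricity
is `2 - 1/n`. -/
lemma avgEcc_star_structure {n : ℕ} (hn : 3 ≤ n) (hcard : Fintype.card V = n) (v0 : V)
    (huniv : ∀ u, u ≠ v0 → G.Adj v0 u)
    (hnone : ∀ u w, u ≠ v0 → w ≠ v0 → ¬ G.Adj u w) :
    avgEcc G = 2 - 1 / (n : ℝ) := by
  classical
  have hecc0 : eccentricity G v0 = 1 := by
    obtain ⟨u, hu⟩ := Fintype.exists_ne_of_one_lt_card (by omega) v0
    refine le_antisymm (ecc_le_iff.mpr fun x => ?_) ?_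
    · rcases eq_or_ne x v0 with rfl | hx
      · simp [SimpleGraph.dist_self]
      · exact le_of_eq (SimpleGraph.dist_eq_one_iff_adj.mpr (huniv x hx))
    · calc 1 = G.dist v0 u := (SimpleGraph.dist_eq_one_iff_adj.mpr (huniv u hu)).symm
        _ ≤ _ := dist_le_ecc v0 u
  have hecc2 : ∀ u, u ≠ v0 → eccentricity G u = 2 := by
    intro u hu
    have hle : ∀ x, G.dist u x ≤ 2 := by
      intro x
      rcases eq_or_ne x v0 with rfl | hx
      · calc G.dist u x ≤ 1 := le_of_eq (SimpleGraph.dist_eq_one_iff_adj.mpr (huniv u hu).symm)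
          _ ≤ 2 := one_le_two
      · rcases eq_or_ne x u with rfl | hxu
        · simp [SimpleGraph.dist_self]
        · calc G.dist u x ≤ (SimpleGraph.Walk.cons (huniv u hu).symm
                (SimpleGraph.Walk.cons (huniv x hx) SimpleGraph.Walk.nil)).length :=
              SimpleGraph.dist_le _
            _ = 2 := by simp
    obtain ⟨w, hwu, hwv0⟩ := exists_third hn hcard u v0
    have hreach : G.Reachable u w :=
      ((huniv u hu).symm.reachable).trans (huniv w hwv0).reachable
    have hd0 : G.dist u w ≠ 0 := by
      rw [ne_eq, SimpleGraph.dist_eq_zero_iff_eq_or_not_reachable]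
      push_neg
      exact ⟨fun h => hwu h.symm, hreach⟩
    have hd1 : G.dist u w ≠ 1 := by
      rw [ne_eq, SimpleGraph.dist_eq_one_iff_adj]
      exact hnone u w hu hwv0
    have hd : G.dist u w = 2 := by have := hle w; omega
    refine le_antisymm (ecc_le_iff.mpr hle) ?_
    calc 2 = G.dist u w := hd.symm
      _ ≤ _ := dist_le_ecc u w
  have hsum : ∑ v : V, eccentricity G v = 2 * n - 1 := by
    rw [← Finset.add_sum_erase Finset.univ _ (Finset.mem_univ v0)]
    have heq : ∑ v ∈ Finset.univ.erase v0, eccentricity G v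
        = ∑ _v ∈ Finset.univ.erase v0, 2 :=
      Finset.sum_congr rfl fun x hx => hecc2 x (Finset.mem_erase.mp hx).1
    rw [heq, Finset.sum_const, Finset.card_erase_of_mem (Finset.mem_univ v0),
      Finset.card_univ, hcard, hecc0, smul_eq_mul]
    omega
  have hn0 : (n : ℝ) ≠ 0 := by positivity
  rw [avgEcc, hcard]
  rw [show (∑ v : V, (eccentricity G v : ℝ)) = ((∑ v : V, eccentricity G v : ℕ) : ℝ) by
    push_cast; ring]
  rw [hsum]
  have h1 : ((2 * n - 1 : ℕ) : ℝ) = 2 * (n : ℝ) - 1 := by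
    have h2 : 1 ≤ 2 * n := by omega
    push_cast [Nat.cast_sub h2]
    ring
  rw [h1]
  field_simp

omit [Fintype V] in
/-- A tree has no triangles. -/
lemma tree_no_triangle {T : SimpleGraph V} (hT : T.IsTree) {a b c : V}
    (hab : T.Adj a b) (hbc : T.Adj b c) (hac : T.Adj a c) : False := by
  have hne_ab : a ≠ b := hab.ne
  have hne_bc : b ≠ c := hbc.ne
  have hne_ac : a ≠ c := hac.ne
  have hp1 : (SimpleGraph.Walk.cons hac SimpleGraph.Walk.nil).IsPath := by
    rw [SimpleGraph.Walk.isPath_def]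
    simp [hne_ac]
  have hp2 : (SimpleGraph.Walk.cons hab
      (SimpleGraph.Walk.cons hbc SimpleGraph.Walk.nil)).IsPath := by
    rw [SimpleGraph.Walk.isPath_def]
    simp [hne_ab, hne_bc, hne_ac]
  obtain ⟨p, -, hun⟩ := hT.existsUnique_path a c
  have heq := (hun _ hp1).trans (hun _ hp2).symm
  have := congrArg SimpleGraph.Walk.length heq
  simp at this

/-- A vertex of eccentricity at most `1` in a tree is universal, and no other edges exist. -/
lemma universal_of_ecc_le_one {T : SimpleGraph V} (hT : T.IsTree) {v0 : V}
    (h : eccentricity T v0 ≤ 1) :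
    (∀ u, u ≠ v0 → T.Adj v0 u) ∧ (∀ u w, u ≠ v0 → w ≠ v0 → ¬ T.Adj u w) := by
  have huniv : ∀ u, u ≠ v0 → T.Adj v0 u := by
    intro u hu
    have h1 : T.dist v0 u ≤ 1 := le_trans (dist_le_ecc v0 u) h
    have h2 : 0 < T.dist v0 u := hT.isConnected.pos_dist_of_ne (Ne.symm hu)
    exact SimpleGraph.dist_eq_one_iff_adj.mp (by omega)
  exact ⟨huniv, fun u w hu hw hadj =>
    tree_no_triangle hT (huniv u hu) hadj (huniv w hw)⟩

end Aux

/-- Among trees on `n ≥ 3` vertices, the star `Sₙ` is the unique tree minimizing the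
average eccentricity: `ecc T ≥ 2 - 1/n = ecc Sₙ` with equality iff `T ≅ Sₙ`. -/
theorem star_min_avgEcc {V : Type*} [Fintype V] (T : SimpleGraph V) (hT : T.IsTree)
    {n : ℕ} (hn : 3 ≤ n) (hcard : Fintype.card V = n) :
    2 - 1 / (n : ℝ) ≤ avgEcc T ∧
    avgEcc (_root_.starGraph n) = 2 - 1 / (n : ℝ) ∧
    (avgEcc T = 2 - 1 / (n : ℝ) ↔ Nonempty (T ≃g _root_.starGraph n)) := by
  classical
  haveI : NeZero n := ⟨by omega⟩
  have hn0 : (n : ℝ) ≠ 0 := by positivity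
  -- adjacency in the star graph
  have hstar_adj : ∀ i j : Fin n, (_root_.starGraph n).Adj i j ↔ i ≠ j ∧ (i = 0 ∨ j = 0) := by
    intro i j
    rw [_root_.starGraph, SimpleGraph.fromRel_adj]
    simp [fin_val_eq_zero_iff]
  -- the star's average eccentricity
  have hstar : avgEcc (_root_.starGraph n) = 2 - 1 / (n : ℝ) := by
    refine avgEcc_star_structure hn (Fintype.card_fin n) 0 (fun u hu => ?_)
      (fun u w hu hw hadj => ?_)
    · exact (hstar_adj 0 u).mpr ⟨fun h => hu h.symm, Or.inl rfl⟩
    · rcases (hstar_adj u w).mp hadj with ⟨-, h | h⟩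
      · exact hu h
      · exact hw h
  -- each eccentricity is at least 1
  have hecc1 : ∀ v : V, 1 ≤ eccentricity T v := by
    intro v
    obtain ⟨u, hu⟩ := Fintype.exists_ne_of_one_lt_card (by omega) v
    calc 1 ≤ T.dist v u := hT.isConnected.pos_dist_of_ne (Ne.symm hu)
      _ ≤ _ := dist_le_ecc v u
  -- lower bound on the sum of eccentricities
  have hsum_ge : 2 * n - 1 ≤ ∑ v : V, eccentricity T v := by
    by_cases h : ∃ v0 : V, eccentricity T v0 ≤ 1
    · obtain ⟨v0, hv0⟩ := h
      obtain ⟨huniv, hnone⟩ := universal_of_ecc_le_one hT hv0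
      have hecc2 : ∀ u : V, u ≠ v0 → 2 ≤ eccentricity T u := by
        intro u hu
        obtain ⟨w, hwu, hwv0⟩ := exists_third hn hcard u v0
        have hd0 : 0 < T.dist u w := hT.isConnected.pos_dist_of_ne (Ne.symm hwu)
        have hd1 : T.dist u w ≠ 1 := by
          rw [ne_eq, SimpleGraph.dist_eq_one_iff_adj]
          exact hnone u w hu hwv0
        calc 2 ≤ T.dist u w := by omega
          _ ≤ _ := dist_le_ecc u w
      rw [← Finset.add_sum_erase Finset.univ _ (Finset.mem_univ v0)]
      have h2 : 2 * (n - 1) ≤ ∑ v ∈ Finset.univ.erase v0, eccentricity T v := by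
        calc 2 * (n - 1) = ∑ _v ∈ Finset.univ.erase v0, 2 := by
              rw [Finset.sum_const, Finset.card_erase_of_mem (Finset.mem_univ v0),
                Finset.card_univ, hcard, smul_eq_mul, mul_comm]
          _ ≤ _ := Finset.sum_le_sum fun x hx => hecc2 x (Finset.mem_erase.mp hx).1
      have h1 := hecc1 v0
      omega
    · push_neg at h
      calc 2 * n - 1 ≤ 2 * n := by omega
        _ = ∑ _v : V, 2 := by
            rw [Finset.sum_const, Finset.card_univ, hcard, smul_eq_mul, mul_comm]
        _ ≤ _ := Finset.sum_le_sum fun v _ => h v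
  -- rewrite avgEcc T as a cast of the natural sum
  have hcast : avgEcc T = ((∑ v : V, eccentricity T v : ℕ) : ℝ) / n := by
    rw [avgEcc, hcard]
    congr 1
    exact (Nat.cast_sum _ _).symm
  have htarget : ((2 * n - 1 : ℕ) : ℝ) / n = 2 - 1 / (n : ℝ) := by
    have h1 : ((2 * n - 1 : ℕ) : ℝ) = 2 * (n : ℝ) - 1 := by
      have h2 : 1 ≤ 2 * n := by omega
      push_cast [Nat.cast_sub h2]
      ring
    rw [h1]
    field_simp
  -- the lower bound
  have hlb : 2 - 1 / (n : ℝ) ≤ avgEcc T := by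
    rw [hcast, ← htarget]
    gcongr
  refine ⟨hlb, hstar, ?_, ?_⟩
  · -- equality implies isomorphism
    intro heq
    have hsum_eq : ∑ v : V, eccentricity T v = 2 * n - 1 := by
      have h1 : ((∑ v : V, eccentricity T v : ℕ) : ℝ) / n = ((2 * n - 1 : ℕ) : ℝ) / n := by
        rw [← hcast, heq, htarget]
      have h2 : ((∑ v : V, eccentricity T v : ℕ) : ℝ) = ((2 * n - 1 : ℕ) : ℝ) :=
        by
          rw [div_eq_div_iff hn0 hn0] at h1
          exact mul_right_cancel₀ hn0 h1
      exact_mod_cast h2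
    -- there is a vertex of eccentricity 1
    have hex : ∃ v0 : V, eccentricity T v0 ≤ 1 := by
      by_contra h
      push_neg at h
      have h2n : 2 * n ≤ ∑ v : V, eccentricity T v := by
        calc 2 * n = ∑ _v : V, 2 := by
              rw [Finset.sum_const, Finset.card_univ, hcard, smul_eq_mul, mul_comm]
          _ ≤ _ := Finset.sum_le_sum fun v _ => h v
      omega
    obtain ⟨v0, hv0⟩ := hex
    obtain ⟨huniv, hnone⟩ := universal_of_ecc_le_one hT hv0
    -- build the isomorphism
    set e0 : V ≃ Fin n := Fintype.equivFinOfCardEq hcard with he0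
    set e : V ≃ Fin n := e0.trans (Equiv.swap (e0 v0) 0) with he
    have hev0 : e v0 = 0 := by simp [he, Equiv.swap_apply_left]
    have hzero : ∀ x : V, e x = 0 ↔ x = v0 := fun x =>
      ⟨fun hx => e.injective (hx.trans hev0.symm), fun hx => hx ▸ hev0⟩
    have hTadj : ∀ a b : V, T.Adj a b ↔ a ≠ b ∧ (a = v0 ∨ b = v0) := by
      intro a b
      constructor
      · intro h
        refine ⟨h.ne, ?_⟩
        by_contra hc
        push_neg at hc
        exact hnone a b hc.1 hc.2 h
      · rintro ⟨hne, rfl | rfl⟩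
        · exact huniv b (fun h => hne h.symm)
        · exact (huniv a hne).symm
    refine ⟨⟨e, ?_⟩⟩
    intro a b
    rw [hstar_adj, hTadj]
    simp only [ne_eq, EmbeddingLike.apply_eq_iff_eq, hzero]
  · -- isomorphism implies equality
    rintro ⟨φ⟩
    set v0 : V := φ.symm 0 with hv0
    have hφv0 : φ v0 = 0 := by simp [hv0]
    apply avgEcc_star_structure hn hcard v0
    · intro u hu
      have h1 : φ u ≠ 0 := by
        intro h
        exact hu (by rw [hv0, ← h]; simp)
      have h2 : (_root_.starGraph n).Adj (φ v0) (φ u) := by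
        rw [hφv0, hstar_adj]
        exact ⟨fun h => h1 h.symm, Or.inl rfl⟩
      exact φ.map_adj_iff.mp h2
    · intro u w hu hw hadj
      have hstar' : (_root_.starGraph n).Adj (φ u) (φ w) := φ.map_adj_iff.mpr hadj
      rw [hstar_adj] at hstar'
      rcases hstar'.2 with h | h
      · exact hu (by rw [hv0, ← h]; simp)
      · exact hw (by rw [hv0, ← h]; simp)
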